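/- For every bounded self-adjoint operator T on a complex Hilbert space H, the infimum over real λ of the operator norm of T + λI equals half the diameter of the spectrum of T. -/

import Mathlib

variable {H : Type*} [NormedAddCommGroup H] [InnerProductSpace ℂ H] [CompleteSpace H]

theorem iInf_norm_add_smul_one_eq_half_diam_spectrum
    (T : H →L[ℂ] H) (hT : IsSelfAdjoint T) :
    ⨅ l : ℝ, ‖T + l • (1 : H →L[ℂ] H)‖ = Metric.diam (spectrum ℂ T) / 2 := by
  rcases subsingleton_or_nontrivial H with hH | hH
  · have h0 : ∀ l : ℝ, ‖T + l • (1 : H →L[ℂ] H)‖ = 0 := fun l => by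
      rw [Subsingleton.elim (T + l • (1 : H →L[ℂ] H)) 0, norm_zero]
    simp only [h0, ciInf_const, spectrum.of_subsingleton, Metric.diam_empty, zero_div]
  · have hnt : Nontrivial (H →L[ℂ] H) := by
      obtain ⟨x, hx⟩ := exists_ne (0 : H)
      exact ⟨1, 0, fun h => hx (by simpa using DFunLike.congr_fun h x)⟩
    set S := spectrum ℝ T with hSdef
    have hSc : IsCompact S := spectrum.isCompact T
    have himg : (Complex.ofReal : ℝ → ℂ) '' S = spectrum ℂ T := by
      simpa using hT.spectrumRestricts.algebraMap_image
    have hSne : S.Nonempty := by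
      rcases spectrum.nonempty T with ⟨z, hz⟩
      rw [← himg] at hz
      rcases hz with ⟨x, hx, _⟩
      exact ⟨x, hx⟩
    set a := sInf S with hadef
    set b := sSup S with hbdef
    have ha : a ∈ S := hSc.sInf_mem hSne
    have hb : b ∈ S := hSc.sSup_mem hSne
    have hab : a ≤ b := csInf_le_csSup hSne hSc.isBounded.bddBelow hSc.isBounded.bddAbove
    have hdiam : Metric.diam (spectrum ℂ T) = b - a := by
      rw [← himg, Complex.isometry_ofReal.diam_image, Real.diam_eq hSc.isBounded]
    -- membership translation
    have hmem : ∀ (l x : ℝ), x ∈ spectrum ℝ (T + l • (1 : H →L[ℂ] H)) ↔ x - l ∈ S := by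
      intro l x
      have h1 : T + l • (1 : H →L[ℂ] H) = algebraMap ℝ (H →L[ℂ] H) l + T := by
        rw [Algebra.algebraMap_eq_smul_one, add_comm]
      have := spectrum.add_mem_add_iff (R := ℝ) (a := T) (r := x - l) (s := l)
      rw [sub_add_cancel] at this
      rw [h1, this]
    -- selfadjointness
    have hsa : ∀ l : ℝ, IsSelfAdjoint (T + l • (1 : H →L[ℂ] H)) := by
      intro l
      refine hT.add ?_
      rw [IsSelfAdjoint, star_smul, star_trivial, star_one]
    -- lower bound
    have hlow : ∀ l : ℝ, (b - a) / 2 ≤ ‖T + l • (1 : H →L[ℂ] H)‖ := by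
      intro l
      have h1 : |a + l| ≤ ‖T + l • (1 : H →L[ℂ] H)‖ := by
        have : a + l ∈ spectrum ℝ (T + l • (1 : H →L[ℂ] H)) := by
          rw [hmem]; simpa using ha
        simpa [Real.norm_eq_abs] using spectrum.norm_le_norm_of_mem this
      have h2 : |b + l| ≤ ‖T + l • (1 : H →L[ℂ] H)‖ := by
        have : b + l ∈ spectrum ℝ (T + l • (1 : H →L[ℂ] H)) := by
          rw [hmem]; simpa using hb
        simpa [Real.norm_eq_abs] using spectrum.norm_le_norm_of_mem this
      have h3 : -(a + l) ≤ |a + l| := neg_le_abs _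
      have h4 : b + l ≤ |b + l| := le_abs_self _
      linarith
    -- upper bound at the midpoint
    have hup : ‖T + (-(a + b) / 2) • (1 : H →L[ℂ] H)‖ ≤ (b - a) / 2 := by
      set l₀ : ℝ := -(a + b) / 2 with hl₀
      rcases CStarAlgebra.norm_or_neg_norm_mem_spectrum (hsa l₀) with h | h
      · have : ‖T + l₀ • (1 : H →L[ℂ] H)‖ - l₀ ∈ S := (hmem l₀ _).mp h
        have hle : ‖T + l₀ • (1 : H →L[ℂ] H)‖ - l₀ ≤ b :=
          le_csSup hSc.isBounded.bddAbove this
        rw [hl₀] at hle; linarith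
      · have : -‖T + l₀ • (1 : H →L[ℂ] H)‖ - l₀ ∈ S := (hmem l₀ _).mp h
        have hle : a ≤ -‖T + l₀ • (1 : H →L[ℂ] H)‖ - l₀ :=
          csInf_le hSc.isBounded.bddBelow this
        rw [hl₀] at hle; linarith
    rw [hdiam]
    refine le_antisymm ?_ (le_ciInf hlow)
    exact le_trans (ciInf_le ⟨0, by rintro x ⟨l, rfl⟩; exact norm_nonneg _⟩ (-(a + b) / 2)) hup
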